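/- Let n ≥ 1 be an integer, let s > 0, and for u ∈ {1,…,n} let c_u = (cos((u−1)π/n), sin((u−1)π/n)) ∈ ℝ². If p ∈ ℝ² satisfies |⟨c_u, p⟩| ≥ s for every u ∈ {1,…,n}, then ‖p‖ ≥ s·√(2/(1 − cos(π/n))). -/

import Mathlib

open scoped RealInnerProductSpace
open Real

/-- The unit vector in the plane with angle `(u−1)·π/n`. -/
noncomputable def dirVec (n u : ℕ) : EuclideanSpace ℝ (Fin 2) :=
  (WithLp.equiv 2 (Fin 2 → ℝ)).symm
    ![Real.cos (((u : ℝ) - 1) * Real.pi / n), Real.sin (((u : ℝ) - 1) * Real.pi / n)]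

lemma inner_dirVec (n u : ℕ) (p : EuclideanSpace ℝ (Fin 2)) :
    ⟪dirVec n u, p⟫ = Real.cos (((u:ℝ)-1)*π/n) * p 0 + Real.sin (((u:ℝ)-1)*π/n) * p 1 := by
  simp [dirVec, PiLp.inner_apply, Fin.sum_univ_two]
  ring

lemma norm_sub_dirVec (n u : ℕ) (hn : n ≠ 0) :
    ‖dirVec n u - dirVec n (u+1)‖ = Real.sqrt (2 - 2*Real.cos (π/n)) := by
  rw [EuclideanSpace.norm_eq]
  simp only [dirVec, PiLp.sub_apply, WithLp.equiv_symm_apply, PiLp.toLp_apply, WithLp.ofLp_toLp, Fin.sum_univ_two,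
    Matrix.cons_val_zero, Matrix.cons_val_one, Matrix.head_cons, Real.norm_eq_abs, sq_abs]
  congr 1
  set a : ℝ := ((u:ℝ)-1)*π/n
  set b : ℝ := ((((u+1):ℕ):ℝ)-1)*π/n with hb
  have hn2 : (n:ℝ) ≠ 0 := Nat.cast_ne_zero.mpr hn
  have hab : b - a = π/n := by
    rw [hb]; push_cast; rw [← sub_div]; congr 1; ring
  have h1 := Real.sin_sq_add_cos_sq a
  have h2 := Real.sin_sq_add_cos_sq b
  have h3 : Real.cos (π/n) = Real.cos b * Real.cos a + Real.sin b * Real.sin a := by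
    rw [← hab, Real.cos_sub]
  nlinarith [h1, h2, h3]

lemma sign_flip (P : ℕ → Prop) : ∀ n : ℕ, ¬ (P 1 ↔ P (n+1)) →
    ∃ u, 1 ≤ u ∧ u ≤ n ∧ ¬(P u ↔ P (u+1)) := by
  intro n
  induction n with
  | zero => intro h; exact absurd Iff.rfl h
  | succ m ih =>
    intro h
    by_cases hm : P (m+1) ↔ P (m+2)
    · obtain ⟨u, h1, h2, h3⟩ := ih (fun hc => h (hc.trans hm))
      exact ⟨u, h1, h2.trans (Nat.le_succ m), h3⟩
    · exact ⟨m+1, Nat.succ_le_succ (Nat.zero_le m), le_refl _, hm⟩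

/-- If `|⟪c_u, p⟫| ≥ s` for all the `n` regularly spaced unit directions `c_u`,
then `‖p‖ ≥ s·√(2/(1 − cos(π/n)))`. -/
theorem norm_lower_bound_of_wedges (n : ℕ) (hn : 1 ≤ n) (s : ℝ) (hs : 0 < s)
    (p : EuclideanSpace ℝ (Fin 2))
    (h : ∀ u ∈ Finset.Icc 1 n, s ≤ |⟪dirVec n u, p⟫|) :
    s * Real.sqrt (2 / (1 - Real.cos (Real.pi / n))) ≤ ‖p‖ := by
  have hn0 : n ≠ 0 := Nat.one_le_iff_ne_zero.mp hn
  have hnR : (n:ℝ) ≠ 0 := Nat.cast_ne_zero.mpr hn0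
  set g : ℕ → ℝ := fun u => ⟪dirVec n u, p⟫ with hg
  -- g (n+1) = - g 1
  have hflipval : g (n+1) = - g 1 := by
    rw [hg]
    simp only [inner_dirVec]
    have e1 : (((n+1:ℕ):ℝ)-1)*π/n = π := by
      push_cast; field_simp; ring
    have e2 : (((1:ℕ):ℝ)-1)*π/n = 0 := by norm_num
    rw [e1, e2]
    simp
  -- every u in [1, n+1] has |g u| ≥ s
  have habs : ∀ u, 1 ≤ u → u ≤ n + 1 → s ≤ |g u| := by
    intro u h1 h2
    rcases Nat.lt_or_ge u (n+1) with hu | hu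
    · exact h u (Finset.mem_Icc.mpr ⟨h1, Nat.lt_succ_iff.mp hu⟩)
    · have : u = n + 1 := le_antisymm h2 hu
      rw [this, hflipval, abs_neg]
      exact h 1 (Finset.mem_Icc.mpr ⟨le_refl _, hn⟩)
  have hg1 : g 1 ≠ 0 := by
    have := habs 1 le_rfl (by omega)
    intro hc; rw [hc] at this; simp at this; linarith
  -- sign flip exists
  obtain ⟨u, hu1, hu2, hu3⟩ := sign_flip (fun u => 0 < g u) n (by
    show ¬ (0 < g 1 ↔ 0 < g (n+1))
    rw [hflipval]
    intro hiff
    rcases lt_trichotomy (g 1) 0 with hlt | heq | hgt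
    · have := hiff.mpr (by linarith); linarith
    · exact hg1 heq
    · have := hiff.mp hgt; linarith)
  -- 2s ≤ |g u - g (u+1)|
  have hgu : s ≤ |g u| := habs u hu1 (by omega)
  have hgu1 : s ≤ |g (u+1)| := habs (u+1) (by omega) (by omega)
  have key : 2 * s ≤ |g u - g (u+1)| := by
    by_cases hp : 0 < g u
    · have hq : ¬ 0 < g (u+1) := fun hc => hu3 ⟨fun _ => hc, fun _ => hp⟩
      push_neg at hq
      have h1 : s ≤ g u := by rwa [abs_of_pos hp] at hgu
      have h2 : s ≤ -(g (u+1)) := by rwa [abs_of_nonpos hq] at hgu1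
      have : 2 * s ≤ g u - g (u+1) := by linarith
      exact this.trans (le_abs_self _)
    · have hq : 0 < g (u+1) := by
        by_contra hc
        exact hu3 ⟨fun h => absurd h hp, fun h => absurd h hc⟩
      push_neg at hp
      have h1 : s ≤ -(g u) := by rwa [abs_of_nonpos hp] at hgu
      have h2 : s ≤ g (u+1) := by rwa [abs_of_pos hq] at hgu1
      have : 2 * s ≤ -(g u - g (u+1)) := by linarith
      exact this.trans (neg_le_abs _)
  -- Cauchy–Schwarz
  have hcs : |g u - g (u+1)| ≤ Real.sqrt (2 - 2*Real.cos (π/n)) * ‖p‖ := by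
    have : g u - g (u+1) = ⟪dirVec n u - dirVec n (u+1), p⟫ := by
      rw [hg]; simp [inner_sub_left]
    rw [this, ← norm_sub_dirVec n u hn0]
    exact abs_real_inner_le_norm _ _
  -- cos (π/n) < 1
  have hπn : 0 < π / n := div_pos Real.pi_pos (by positivity)
  have hπn2 : π / n ≤ π := by
    rw [div_le_iff₀ (by positivity)]
    nlinarith [Real.pi_pos, (Nat.one_le_cast (α := ℝ)).mpr hn]
  have hcos : Real.cos (π/n) < 1 := by
    have := Real.cos_lt_cos_of_nonneg_of_le_pi le_rfl hπn2 hπn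
    simpa using this
  set c := Real.cos (π/n) with hc
  have hc1 : (0:ℝ) < 1 - c := by linarith
  have hs2 : (0:ℝ) < 2 - 2*c := by linarith
  -- final arithmetic
  have h2s : 2 * s ≤ Real.sqrt (2 - 2*c) * ‖p‖ := key.trans hcs
  have hsqrt_pos : 0 < Real.sqrt (2 - 2*c) := Real.sqrt_pos.mpr hs2
  have ht : 0 < Real.sqrt (1 - c) := Real.sqrt_pos.mpr hc1
  have hsq2 : Real.sqrt 2 * Real.sqrt 2 = 2 := Real.mul_self_sqrt (by norm_num)
  have hsq2pos : (0:ℝ) < Real.sqrt 2 := Real.sqrt_pos.mpr (by norm_num)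
  have hsplit : Real.sqrt (2 - 2*c) = Real.sqrt 2 * Real.sqrt (1 - c) := by
    rw [← Real.sqrt_mul (by norm_num : (0:ℝ) ≤ 2)]
    ring_nf
  rw [hsplit] at h2s
  have hdiv : Real.sqrt (2 / (1 - c)) = Real.sqrt 2 / Real.sqrt (1 - c) :=
    Real.sqrt_div (by norm_num) _
  rw [hdiv, ← mul_div_assoc, div_le_iff₀ ht]
  nlinarith [h2s, hsq2, norm_nonneg p]
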